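/- arXiv:2202.13885 — 2 statements merged into one kernel-verified Lean document; each statement's English description precedes it below -/
import Mathlib

section
/- In SL₂(k), if t ∈ SL₂(k) is diagonal with distinct eigenvalues, then every upper unitriangular matrix is a product of a conjugate of t and a conjugate of t⁻¹; consequently U(k) ⊆ B_{t}(2), the ball of radius 2 in the word norm associated to {t}. -/
open Matrix

/-- In `SL₂(k)`, if `t` is diagonal with distinct eigenvalues (`t = diag(λ, λ⁻¹)`,
`λ² ≠ 1`), then every upper unitriangular matrix is a product of a conjugate of `t`
and a conjugate of `t⁻¹`; i.e. `U(k) ⊆ B_t(2)`. -/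
theorem stmt16 {k : Type*} [Field k] (l : k) (hl : l ^ 2 ≠ 1)
    (t : Matrix.SpecialLinearGroup (Fin 2) k)
    (ht : (t : Matrix (Fin 2) (Fin 2) k) = !![l, 0; 0, l⁻¹]) :
    ∀ (u : Matrix.SpecialLinearGroup (Fin 2) k) (a : k),
      (u : Matrix (Fin 2) (Fin 2) k) = !![1, a; 0, 1] →
      ∃ h₁ h₂ : Matrix.SpecialLinearGroup (Fin 2) k,
        u = (h₁ * t * h₁⁻¹) * (h₂ * t⁻¹ * h₂⁻¹) := by
  intro u a hu
  have hdet : (t : Matrix (Fin 2) (Fin 2) k).det = 1 := t.property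
  have hl0 : l ≠ 0 := by
    intro h
    rw [ht] at hdet
    simp [Matrix.det_fin_two_of, h] at hdet
  have hne : (1 : k) - l ^ 2 ≠ 0 := sub_ne_zero.mpr (Ne.symm hl)
  set x : k := a / (1 - l ^ 2) with hx
  refine ⟨@id (Matrix.SpecialLinearGroup (Fin 2) k) ⟨!![1, x; 0, 1], by simp [Matrix.det_fin_two_of]⟩, 1, ?_⟩
  ext i j
  have hti : ((t⁻¹ : Matrix.SpecialLinearGroup (Fin 2) k) : Matrix (Fin 2) (Fin 2) k)
      = !![l⁻¹, 0; 0, l] := by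
    rw [Matrix.SpecialLinearGroup.coe_inv, ht, Matrix.adjugate_fin_two]
    norm_num
  have hid : ((@id (Matrix.SpecialLinearGroup (Fin 2) k) ⟨!![1, x; 0, 1], by simp [Matrix.det_fin_two_of]⟩ :
      Matrix.SpecialLinearGroup (Fin 2) k) : Matrix (Fin 2) (Fin 2) k) = !![1, x; 0, 1] := rfl
  have hhi : (((@id (Matrix.SpecialLinearGroup (Fin 2) k) ⟨!![1, x; 0, 1], by simp [Matrix.det_fin_two_of]⟩)⁻¹ :
      Matrix.SpecialLinearGroup (Fin 2) k) : Matrix (Fin 2) (Fin 2) k)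
      = !![1, -x; 0, 1] := by
    rw [Matrix.SpecialLinearGroup.coe_inv, Matrix.adjugate_fin_two]
    norm_num [hid]
  simp only [Matrix.SpecialLinearGroup.coe_mul, hu, ht, hti, hhi, hid, one_mul, mul_one]
  fin_cases i <;> fin_cases j <;>
    simp [Matrix.mul_apply, Fin.sum_univ_succ, hx] <;> field_simp <;> ring
end

section
/- Gauss-Bruhat decomposition bound for SL₂: let k be a field and let t ∈ SL₂(k) be a diagonal matrix with distinct eigenvalues. Then every element of SL₂(k) is a product of at most 14 conjugates of t or t⁻¹, i.e. SL₂(k) = B_t(14). (The proof uses SL₂(k) ⊆ B_{U(k)}(7), where U(k) is the upper unitriangular subgroup, together with U(k) ⊆ B_t(2).) -/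
open Matrix

def conjGen {H : Type*} [Group H] (S : Set H) : Set H :=
  {x | ∃ s ∈ S, ∃ h : H, x = h * s * h⁻¹ ∨ x = h * s⁻¹ * h⁻¹}

def ball {H : Type*} [Group H] (S : Set H) (n : ℕ) : Set H :=
  {g | ∃ l : List H, l.length ≤ n ∧ (∀ x ∈ l, x ∈ conjGen S) ∧ l.prod = g}

namespace Stmt17Aux

lemma ball_mono {H : Type*} [Group H] {S : Set H} {m n : ℕ} (h : m ≤ n) :
    ball S m ⊆ ball S n := by
  rintro g ⟨L, hL, h1, h2⟩
  exact ⟨L, hL.trans h, h1, h2⟩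

lemma ball_mul {H : Type*} [Group H] {S : Set H} {m n : ℕ} {a b : H}
    (ha : a ∈ ball S m) (hb : b ∈ ball S n) : a * b ∈ ball S (m + n) := by
  obtain ⟨La, hLa, h1a, h2a⟩ := ha
  obtain ⟨Lb, hLb, h1b, h2b⟩ := hb
  refine ⟨La ++ Lb, by simpa using Nat.add_le_add hLa hLb, ?_, ?_⟩
  · intro x hx
    rcases List.mem_append.mp hx with h | h
    exacts [h1a x h, h1b x h]
  · rw [List.prod_append, h2a, h2b]

variable {k : Type*} [Field k]

def Uu (x : k) : SpecialLinearGroup (Fin 2) k :=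
  ⟨!![1, x; 0, 1], by simp [Matrix.det_fin_two_of]⟩

def Ll (x : k) : SpecialLinearGroup (Fin 2) k :=
  ⟨!![1, 0; x, 1], by simp [Matrix.det_fin_two_of]⟩

lemma Uu_inv (x : k) : (Uu x)⁻¹ = Uu (-x) := by
  refine (inv_eq_of_mul_eq_one_right ?_)
  apply Subtype.coe_injective
  show (!![1, x; 0, 1] : Matrix (Fin 2) (Fin 2) k) * !![1, -x; 0, 1] = _
  rw [Matrix.mul_fin_two]
  norm_num
  exact Matrix.one_fin_two.symm

lemma Ll_inv (x : k) : (Ll x)⁻¹ = Ll (-x) := by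
  refine (inv_eq_of_mul_eq_one_right ?_)
  apply Subtype.coe_injective
  show (!![1, 0; x, 1] : Matrix (Fin 2) (Fin 2) k) * !![1, 0; -x, 1] = _
  rw [Matrix.mul_fin_two]
  norm_num
  exact Matrix.one_fin_two.symm

variable (l : k) (hl : l ^ 2 ≠ 1) (t : Matrix.SpecialLinearGroup (Fin 2) k)
  (ht : (t : Matrix (Fin 2) (Fin 2) k) = !![l, 0; 0, l⁻¹])

include hl ht

lemma l_ne_zero : l ≠ 0 := by
  intro h0
  have := t.prop
  rw [ht, Matrix.det_fin_two_of, h0] at this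
  simp at this

lemma tinv : ((t⁻¹ : SpecialLinearGroup (Fin 2) k) : Matrix (Fin 2) (Fin 2) k)
    = !![l⁻¹, 0; 0, l] := by
  rw [Matrix.SpecialLinearGroup.coe_inv, ht, Matrix.adjugate_fin_two]
  norm_num

lemma U_mem (x : k) : Uu x ∈ ball ({t} : Set (SpecialLinearGroup (Fin 2) k)) 2 := by
  have hl0 := l_ne_zero l hl t ht
  have hd : l ^ 2 - 1 ≠ 0 := sub_ne_zero.mpr hl
  set c : k := x / (l ^ 2 - 1) with hc
  refine ⟨[t, Uu c * t⁻¹ * (Uu c)⁻¹], by simp, ?_, ?_⟩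
  · intro y hy
    rcases List.mem_cons.mp hy with h | h
    · exact ⟨t, rfl, 1, Or.inl (by rw [h]; group)⟩
    · simp only [List.mem_singleton] at h
      exact ⟨t, rfl, Uu c, Or.inr h⟩
  · simp only [List.prod_cons, List.prod_nil, mul_one]
    rw [Uu_inv]
    apply Subtype.coe_injective
    simp only [Matrix.SpecialLinearGroup.coe_mul, tinv l hl t ht, ht]
    show (!![l, 0; 0, l⁻¹] : Matrix (Fin 2) (Fin 2) k) *
      (!![1, c; 0, 1] * !![l⁻¹, 0; 0, l] * !![1, -c; 0, 1]) = !![1, x; 0, 1]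
    have hd' : (1 : k) - l ^ 2 ≠ 0 := fun h0 => hd (by linear_combination -h0)
    ext i j
    fin_cases i <;> fin_cases j <;>
      simp [Matrix.mul_fin_two, mul_comm, hc] <;> field_simp [hd'] <;> ring

lemma L_mem (x : k) : Ll x ∈ ball ({t} : Set (SpecialLinearGroup (Fin 2) k)) 2 := by
  have hl0 := l_ne_zero l hl t ht
  have hd : l ^ 2 - 1 ≠ 0 := sub_ne_zero.mpr hl
  set c : k := x * l ^ 2 / (1 - l ^ 2) with hc
  refine ⟨[t, Ll c * t⁻¹ * (Ll c)⁻¹], by simp, ?_, ?_⟩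
  · intro y hy
    rcases List.mem_cons.mp hy with h | h
    · exact ⟨t, rfl, 1, Or.inl (by rw [h]; group)⟩
    · simp only [List.mem_singleton] at h
      exact ⟨t, rfl, Ll c, Or.inr h⟩
  · simp only [List.prod_cons, List.prod_nil, mul_one]
    rw [Ll_inv]
    apply Subtype.coe_injective
    simp only [Matrix.SpecialLinearGroup.coe_mul, tinv l hl t ht, ht]
    show (!![l, 0; 0, l⁻¹] : Matrix (Fin 2) (Fin 2) k) *
      (!![1, 0; c, 1] * !![l⁻¹, 0; 0, l] * !![1, 0; -c, 1]) = !![1, 0; x, 1]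
    have hd' : (1 : k) - l ^ 2 ≠ 0 := fun h0 => hd (by linear_combination -h0)
    ext i j
    fin_cases i <;> fin_cases j <;>
      simp [Matrix.mul_fin_two, mul_comm, hc] <;> field_simp [hd'] <;> ring

lemma decomp (g : SpecialLinearGroup (Fin 2) k)
    (h : (g : Matrix (Fin 2) (Fin 2) k) 1 0 ≠ 0) :
    g ∈ ball ({t} : Set (SpecialLinearGroup (Fin 2) k)) 6 := by
  set a : k := (g : Matrix (Fin 2) (Fin 2) k) 0 0 with ha
  set b : k := (g : Matrix (Fin 2) (Fin 2) k) 0 1 with hb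
  set c : k := (g : Matrix (Fin 2) (Fin 2) k) 1 0 with hc
  set d : k := (g : Matrix (Fin 2) (Fin 2) k) 1 1 with hd
  have hdet : a * d - b * c = 1 := by
    have := g.prop
    rw [Matrix.det_fin_two] at this
    exact this
  have key : g = Uu ((a - 1) / c) * Ll c * Uu ((d - 1) / c) := by
    apply Subtype.coe_injective
    simp only [SpecialLinearGroup.coe_mul]
    show (g : Matrix (Fin 2) (Fin 2) k)
      = !![1, (a-1)/c; 0, 1] * !![1, 0; c, 1] * !![1, (d-1)/c; 0, 1]
    rw [Matrix.eta_fin_two (g : Matrix (Fin 2) (Fin 2) k)]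
    ext i j
    fin_cases i <;> fin_cases j <;>
      simp [Matrix.mul_fin_two, ← ha, ← hb, ← hc, ← hd] <;> field_simp <;>
        first
          | ring1
          | linear_combination d * hdet
          | linear_combination (-d) * hdet
          | linear_combination (1 + d) * hdet
          | linear_combination (-(1 + d)) * hdet
          | linear_combination a * hdet
          | linear_combination (-a) * hdet
          | linear_combination hdet
          | linear_combination (-1 : k) * hdet
  rw [key]
  exact ball_mul (ball_mul (U_mem l hl t ht _) (L_mem l hl t ht _)) (U_mem l hl t ht _)

end Stmt17Aux

/-- If `t ∈ SL₂(k)` is diagonal with distinct eigenvalues, then every element of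
`SL₂(k)` is a product of at most `14` conjugates of `t` or `t⁻¹`:
`SL₂(k) = B_t(14)`. -/
theorem stmt17 {k : Type*} [Field k] (l : k) (hl : l ^ 2 ≠ 1)
    (t : Matrix.SpecialLinearGroup (Fin 2) k)
    (ht : (t : Matrix (Fin 2) (Fin 2) k) = !![l, 0; 0, l⁻¹]) :
    ∀ g : Matrix.SpecialLinearGroup (Fin 2) k, g ∈ ball ({t} : Set _) 14 := by
  intro g
  open Stmt17Aux in
  by_cases h : (g : Matrix (Fin 2) (Fin 2) k) 1 0 ≠ 0
  · exact Stmt17Aux.ball_mono (by norm_num) (Stmt17Aux.decomp l hl t ht g h)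
  · push_neg at h
    have hdet : (g : Matrix (Fin 2) (Fin 2) k) 0 0 * (g : Matrix (Fin 2) (Fin 2) k) 1 1 = 1 := by
      have := g.prop
      rw [Matrix.det_fin_two, h] at this
      simpa using this
    have h11 : (g : Matrix (Fin 2) (Fin 2) k) 1 1 ≠ 0 := by
      intro h0
      rw [h0, mul_zero] at hdet
      exact zero_ne_one hdet
    have h' : ((g * Stmt17Aux.Ll 1 : Matrix.SpecialLinearGroup (Fin 2) k) :
        Matrix (Fin 2) (Fin 2) k) 1 0 ≠ 0 := by
      rw [Matrix.SpecialLinearGroup.coe_mul]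
      simp only [Stmt17Aux.Ll]
      rw [Matrix.mul_apply]
      simp [Fin.sum_univ_two, h, h11]
    have key : g = (g * Stmt17Aux.Ll 1) * Stmt17Aux.Ll (-1) := by
      rw [mul_assoc, ← Stmt17Aux.Ll_inv, mul_inv_cancel, mul_one]
    rw [key]
    exact Stmt17Aux.ball_mono (by norm_num)
      (Stmt17Aux.ball_mul (Stmt17Aux.decomp l hl t ht _ h') (Stmt17Aux.L_mem l hl t ht (-1)))
end
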